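/- If a symmetric real n×n matrix A has simple spectrum (all eigenvalues distinct) and none of its eigenvectors is orthogonal to the all-ones vector, then the only permutation matrix Π satisfying ΠA = AΠ is the identity. -/

import Mathlib

open Matrix

/-- `P` is a permutation matrix. -/
def IsPermMatrix {n : ℕ} (P : Matrix (Fin n) (Fin n) ℝ) : Prop :=
  ∃ σ : Equiv.Perm (Fin n), P = σ.permMatrix ℝ

/-- `A` has simple spectrum: every eigenspace has dimension at most one. -/
def HasSimpleSpectrum {n : ℕ} (A : Matrix (Fin n) (Fin n) ℝ) : Prop :=
  ∀ μ : ℝ, Module.finrank ℝ (Module.End.eigenspace (Matrix.toLin' A) μ) ≤ 1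

/-- `u` is an eigenvector of `A`. -/
def IsEigenvector {n : ℕ} (A : Matrix (Fin n) (Fin n) ℝ) (u : Fin n → ℝ) : Prop :=
  u ≠ 0 ∧ ∃ μ : ℝ, A.mulVec u = μ • u

lemma permMatrix_mulVec' {n : ℕ} (σ : Equiv.Perm (Fin n)) (u : Fin n → ℝ) :
    (σ.permMatrix ℝ) *ᵥ u = fun i => u (σ i) := by
  funext i
  simp [Matrix.mulVec, dotProduct, Equiv.Perm.permMatrix, PEquiv.toMatrix_apply,
    Equiv.toPEquiv_apply]

theorem stmt_0 {n : ℕ} (A : Matrix (Fin n) (Fin n) ℝ) (hA : A.IsSymm)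
    (hsimple : HasSimpleSpectrum A)
    (hfriendly : ∀ u : Fin n → ℝ, IsEigenvector A u → ∑ i, u i ≠ 0)
    (P : Matrix (Fin n) (Fin n) ℝ) (hP : IsPermMatrix P)
    (hcomm : P * A = A * P) : P = 1 := by
  obtain ⟨σ, rfl⟩ := hP
  have hA' : A.IsHermitian := by
    rw [Matrix.IsHermitian, Matrix.conjTranspose_eq_transpose_of_trivial]; exact hA
  set b := hA'.eigenvectorBasis with hb
  have key : ∀ i, (σ.permMatrix ℝ) *ᵥ ⇑(b i) = ⇑(b i) := by
    intro i
    set u : Fin n → ℝ := ⇑(b i) with hu_def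
    set μ := hA'.eigenvalues i with hμ
    have hu : A *ᵥ u = μ • u := hA'.mulVec_eigenvectorBasis i
    have hune : u ≠ 0 := fun h =>
      b.toBasis.ne_zero i (by rw [OrthonormalBasis.coe_toBasis]; ext j; simpa using congrFun h j)
    have hsum : (∑ j, u j) ≠ 0 := hfriendly u ⟨hune, μ, hu⟩
    have hPu : A *ᵥ ((σ.permMatrix ℝ) *ᵥ u) = μ • ((σ.permMatrix ℝ) *ᵥ u) := by
      rw [Matrix.mulVec_mulVec, ← hcomm, ← Matrix.mulVec_mulVec, hu, Matrix.mulVec_smul]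
    have h1 : u ∈ Module.End.eigenspace (Matrix.toLin' A) μ := by
      rw [Module.End.mem_eigenspace_iff, Matrix.toLin'_apply]; exact hu
    have h2 : (σ.permMatrix ℝ) *ᵥ u ∈ Module.End.eigenspace (Matrix.toLin' A) μ := by
      rw [Module.End.mem_eigenspace_iff, Matrix.toLin'_apply]; exact hPu
    obtain ⟨v, hv⟩ := finrank_le_one_iff.mp (hsimple μ)
    obtain ⟨c, hc⟩ := hv ⟨u, h1⟩
    obtain ⟨d, hd⟩ := hv ⟨_, h2⟩
    have hc' : c • (v : Fin n → ℝ) = u := congrArg Subtype.val hc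
    have hd' : d • (v : Fin n → ℝ) = (σ.permMatrix ℝ) *ᵥ u := congrArg Subtype.val hd
    have hcne : c ≠ 0 := by
      rintro rfl; rw [zero_smul] at hc'; exact hune hc'.symm
    have hPu_eq : (σ.permMatrix ℝ) *ᵥ u = (d / c) • u := by
      rw [← hd', ← hc', smul_smul, div_mul_cancel₀ _ hcne]
    have hsum_eq : ∑ j, ((d / c) • u) j = ∑ j, u j := by
      rw [← hPu_eq, permMatrix_mulVec']
      exact Equiv.sum_comp σ u
    have hmul : (d / c) * ∑ j, u j = ∑ j, u j := by
      rw [Finset.mul_sum]; simpa using hsum_eq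
    have hdc : d / c = 1 := mul_right_cancel₀ hsum (by rw [hmul, one_mul])
    rw [hPu_eq, hdc, one_smul]
  -- now conclude P = 1
  have hbB : ∀ i, Matrix.toLin' (σ.permMatrix ℝ) (b.toBasis.map (WithLp.linearEquiv 2 ℝ (Fin n → ℝ)) i)
      = Matrix.toLin' (1 : Matrix (Fin n) (Fin n) ℝ) (b.toBasis.map (WithLp.linearEquiv 2 ℝ (Fin n → ℝ)) i) := by
    intro i
    simp only [Module.Basis.map_apply, OrthonormalBasis.coe_toBasis, WithLp.linearEquiv_apply,
      Matrix.toLin'_apply, Matrix.toLin'_one]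
    exact key i
  have := Module.Basis.ext (b.toBasis.map (WithLp.linearEquiv 2 ℝ (Fin n → ℝ))) hbB
  exact Matrix.toLin'.injective this
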